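/- Let ν be a probability measure on ℝ^d, σ > 0, and let f, g : ℝ^d → ℝ be measurable with sup_{x ∈ ℝ^d} |f(x) − g(x)| ≤ δ for some δ ≥ 0. Let m be the Gibbs measure of f at temperature σ relative to ν, i.e. Z := ∫ e^{−f(x)/σ} ν(dx) ∈ (0, ∞) and m(A) = Z⁻¹ ∫_A e^{−f(x)/σ} ν(dx) for all Borel A. Then for every a ∈ ℝ with ν({x : g(x) < a}) > 0, the quantity D := ∫ 1_{{g(y) < a}} e^{(a − g(y))/σ} ν(dy) is finite and strictly positive, and m({x : g(x) > a}) ≤ e^{2δ/σ} / D. -/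

import Mathlib

open MeasureTheory

/-- `m` is the Gibbs measure of `f` at temperature `σ` relative to `ν`:
`Z := ∫ e^{−f/σ} dν ∈ (0, ∞)` and `m(A) = Z⁻¹ ∫_A e^{−f/σ} dν` for every Borel `A`. -/
def IsGibbsMeasure {d : ℕ} (ν : Measure (EuclideanSpace ℝ (Fin d))) (σ : ℝ)
    (f : EuclideanSpace ℝ (Fin d) → ℝ) (m : Measure (EuclideanSpace ℝ (Fin d))) : Prop :=
  Integrable (fun x => Real.exp (-(f x) / σ)) ν ∧
  0 < ∫ x, Real.exp (-(f x) / σ) ∂ν ∧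
  ∀ A : Set (EuclideanSpace ℝ (Fin d)), MeasurableSet A →
    m A = ENNReal.ofReal
      ((∫ x in A, Real.exp (-(f x) / σ) ∂ν) / ∫ x, Real.exp (-(f x) / σ) ∂ν)

/-- If `sup |f − g| ≤ δ` and `m` is the Gibbs measure of `f` at
temperature `σ`, then for every level `a` with `ν{g < a} > 0`, the quantity
`D := ∫_{g<a} e^{(a−g)/σ} dν` is finite and positive, and `m{g > a} ≤ e^{2δ/σ}/D`. -/
theorem stmt7 {d : ℕ} (ν : Measure (EuclideanSpace ℝ (Fin d))) [IsProbabilityMeasure ν]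
    (σ : ℝ) (hσ : 0 < σ)
    (f g : EuclideanSpace ℝ (Fin d) → ℝ)
    (hfmeas : Measurable f) (hgmeas : Measurable g)
    (δ : ℝ) (hδ : 0 ≤ δ) (hfg : ∀ x, |f x - g x| ≤ δ)
    (m : Measure (EuclideanSpace ℝ (Fin d))) (hm : IsGibbsMeasure ν σ f m)
    (a : ℝ) (ha : 0 < ν {x | g x < a}) :
    IntegrableOn (fun y => Real.exp ((a - g y) / σ)) {y | g y < a} ν ∧
    0 < ∫ y in {y | g y < a}, Real.exp ((a - g y) / σ) ∂ν ∧
    m {x | a < g x}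
      ≤ ENNReal.ofReal
          (Real.exp (2 * δ / σ) / ∫ y in {y | g y < a}, Real.exp ((a - g y) / σ) ∂ν) := by
  obtain ⟨hint, hZpos, hmA⟩ := hm
  have hSmeas : MeasurableSet {y | g y < a} := measurableSet_lt hgmeas measurable_const
  have hS'meas : MeasurableSet {x | a < g x} := measurableSet_lt measurable_const hgmeas
  -- global integrability of the D-integrand
  have hexp_int : Integrable (fun y => Real.exp ((a - g y) / σ)) ν := by
    have hmble : Measurable fun y => Real.exp ((a - g y) / σ) := by
      exact (((measurable_const.sub hgmeas).div_const σ).exp)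
    refine (hint.const_mul (Real.exp ((a + δ) / σ))).mono hmble.aestronglyMeasurable ?_
    refine Filter.Eventually.of_forall fun y => ?_
    have h1 := (abs_le.1 (hfg y)).1
    have h2 := (abs_le.1 (hfg y)).2
    have hle : (a - g y) / σ ≤ (a + δ) / σ + (-(f y)) / σ := by
      rw [← add_div, div_le_div_iff₀ hσ hσ]
      nlinarith [hσ.le]
    calc ‖Real.exp ((a - g y) / σ)‖ = Real.exp ((a - g y) / σ) := by
          rw [Real.norm_eq_abs, Real.abs_exp]
      _ ≤ Real.exp ((a + δ) / σ + (-(f y)) / σ) := Real.exp_le_exp.2 hle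
      _ = Real.exp ((a + δ) / σ) * Real.exp (-(f y) / σ) := Real.exp_add _ _
      _ ≤ ‖Real.exp ((a + δ) / σ) * Real.exp (-(f y) / σ)‖ := le_abs_self _
  have hDint : IntegrableOn (fun y => Real.exp ((a - g y) / σ)) {y | g y < a} ν :=
    hexp_int.integrableOn
  -- positivity of D
  have hDpos : 0 < ∫ y in {y | g y < a}, Real.exp ((a - g y) / σ) ∂ν := by
    have hmeas_pos : 0 < (ν {y | g y < a}).toReal :=
      ENNReal.toReal_pos ha.ne' (measure_ne_top ν _)
    have h1 : (ν {y | g y < a}).toReal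
        ≤ ∫ y in {y | g y < a}, Real.exp ((a - g y) / σ) ∂ν := by
      have hmono : (∫ _y in {y | g y < a}, (1:ℝ) ∂ν)
          ≤ ∫ y in {y | g y < a}, Real.exp ((a - g y) / σ) ∂ν := by
        refine setIntegral_mono_on
          (integrableOn_const (measure_ne_top ν _))
          hDint hSmeas (fun y hy => ?_)
        have hya : g y < a := hy
        have h0 : (0:ℝ) ≤ (a - g y) / σ := div_nonneg (by linarith) hσ.le
        simpa using Real.one_le_exp h0
      have h := hmono; simp at h; exact h
    linarith
  refine ⟨hDint, hDpos, ?_⟩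
  set Z := ∫ x, Real.exp (-(f x) / σ) ∂ν with hZdef
  set D := ∫ y in {y | g y < a}, Real.exp ((a - g y) / σ) ∂ν with hDdef
  -- numerator bound
  have hN_le : (∫ x in {x | a < g x}, Real.exp (-(f x) / σ) ∂ν)
      ≤ Real.exp ((δ - a) / σ) := by
    have h1 : (∫ x in {x | a < g x}, Real.exp (-(f x) / σ) ∂ν)
        ≤ ∫ _x in {x | a < g x}, Real.exp ((δ - a) / σ) ∂ν := by
      refine setIntegral_mono_on hint.integrableOn
        (integrableOn_const (measure_ne_top ν _)) hS'meas (fun x hx => ?_)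
      have hax : a < g x := hx
      have h1 := (abs_le.1 (hfg x)).1
      have h2 := (abs_le.1 (hfg x)).2
      refine Real.exp_le_exp.2 ?_
      rw [div_le_div_iff₀ hσ hσ]
      nlinarith [hσ.le]
    have h2 : ∫ _x in {x | a < g x}, Real.exp ((δ - a) / σ) ∂ν
        = (ν {x | a < g x}).toReal * Real.exp ((δ - a) / σ) := by
      rw [setIntegral_const]; simp [smul_eq_mul]; rfl
    have h3 : (ν {x | a < g x}).toReal ≤ 1 := by
      have := prob_le_one (μ := ν) (s := {x | a < g x})
      simpa using ENNReal.toReal_le_of_le_ofReal zero_le_one (by simpa using this)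
    nlinarith [Real.exp_pos ((δ - a) / σ), h1, h2]
  -- denominator bound
  have hZ_ge : Real.exp (-(a + δ) / σ) * D ≤ Z := by
    have h1 : Real.exp (-(a + δ) / σ) * D
        = ∫ y in {y | g y < a},
            Real.exp (-(a + δ) / σ) * Real.exp ((a - g y) / σ) ∂ν := by
      rw [hDdef, integral_const_mul]
    have h2 : (∫ y in {y | g y < a},
          Real.exp (-(a + δ) / σ) * Real.exp ((a - g y) / σ) ∂ν)
        ≤ ∫ y in {y | g y < a}, Real.exp (-(f y) / σ) ∂ν := by
      refine setIntegral_mono_on ((hexp_int.const_mul _).integrableOn)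
        hint.integrableOn hSmeas (fun y _ => ?_)
      rw [← Real.exp_add]
      refine Real.exp_le_exp.2 ?_
      have h2 := (abs_le.1 (hfg y)).2
      rw [← add_div, div_le_div_iff₀ hσ hσ]
      nlinarith [hσ.le]
    have h3 : (∫ y in {y | g y < a}, Real.exp (-(f y) / σ) ∂ν) ≤ Z :=
      setIntegral_le_integral hint (Filter.Eventually.of_forall fun x => (Real.exp_pos _).le)
    linarith
  rw [hmA _ hS'meas]
  refine ENNReal.ofReal_le_ofReal ?_
  have hc2 : 0 < Real.exp (-(a + δ) / σ) * D := by positivity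
  calc (∫ x in {x | a < g x}, Real.exp (-(f x) / σ) ∂ν) / Z
      ≤ Real.exp ((δ - a) / σ) / (Real.exp (-(a + δ) / σ) * D) :=
        div_le_div₀ (Real.exp_pos _).le hN_le hc2 hZ_ge
    _ = Real.exp (2 * δ / σ) / D := by
        rw [div_mul_eq_div_div, ← Real.exp_sub]
        congr 2
        field_simp
        ring
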